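/- Let f : V → V be a nonexpansive map on a finite dimensional real normed space (V,‖·‖) whose fixed point set Fix(f) = {x : f(x) = x} is unbounded. Then for each δ > 0 there exists a nonexpansive map g : V → V with no fixed points such that sup_{x ∈ V} ‖f(x) − g(x)‖ ≤ δ. -/

import Mathlib

/-- If the fixed point set of a nonexpansive map `f` on a finite dimensional real normed
space is unbounded, then for every `δ > 0` there is a fixed-point-free nonexpansive map
`g` with `‖f x - g x‖ ≤ δ` for all `x`. -/
theorem stmt8 {V : Type*} [NormedAddCommGroup V] [NormedSpace ℝ V] [FiniteDimensional ℝ V]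
    (f : V → V) (hf : ∀ x y : V, ‖f x - f y‖ ≤ ‖x - y‖)
    (hub : ¬ Bornology.IsBounded {x : V | f x = x})
    (δ : ℝ) (hδ : 0 < δ) :
    ∃ g : V → V, (∀ x y : V, ‖g x - g y‖ ≤ ‖x - y‖) ∧
      {x : V | g x = x} = ∅ ∧ ∀ x : V, ‖f x - g x‖ ≤ δ := by
  -- a sequence of fixed points with norms tending to infinity
  have hA : ∀ n : ℕ, ∃ p : V, f p = p ∧ (n : ℝ) < ‖p‖ := by
    intro n
    by_contra h
    push_neg at h
    exact hub (isBounded_iff_forall_norm_le.2 ⟨n, fun x hx => h x hx⟩)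
  choose p hp hpn using hA
  have hp0 : ∀ n, 0 < ‖p n‖ := fun n => lt_of_le_of_lt (Nat.cast_nonneg n) (hpn n)
  set q : ℕ → V := fun n => ‖p n‖⁻¹ • p n with hq
  have hqs : ∀ n, q n ∈ Metric.sphere (0 : V) 1 := by
    intro n
    simp [hq, norm_smul, abs_of_pos (inv_pos.2 (hp0 n)),
      inv_mul_cancel₀ (hp0 n).ne']
  obtain ⟨u, hu, φ, hφ, hconv⟩ := (isCompact_sphere (0 : V) 1).tendsto_subseq hqs
  have hu1 : ‖u‖ = 1 := by simpa using hu
  refine ⟨fun x => f x + δ • u, ?_, ?_, ?_⟩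
  · intro x y
    simpa using hf x y
  · -- no fixed points
    ext x
    simp only [Set.mem_setOf_eq, Set.mem_empty_iff_false, iff_false]
    intro hx
    have hfx : f x = x - δ • u := eq_sub_of_add_eq hx
    -- choose a good index k
    obtain ⟨N, hN⟩ := (Metric.tendsto_atTop.1 hconv) (1/4) (by norm_num)
    set k := max N (⌈8 * ‖x‖⌉₊ + 1) with hk
    -- extract the relevant fixed point P
    obtain ⟨P, hPfix, hPx, hqk⟩ :
        ∃ P : V, f P = P ∧ 8 * ‖x‖ + 1 ≤ ‖P‖ ∧ ‖‖P‖⁻¹ • P - u‖ < 1/4 := by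
      refine ⟨p (φ k), hp _, ?_, ?_⟩
      · have hkφ : (k : ℝ) ≤ ‖p (φ k)‖ := le_of_lt <|
          lt_of_le_of_lt (Nat.cast_le.2 (hφ.le_apply)) (hpn (φ k))
        refine le_trans ?_ hkφ
        have h1 : (⌈8 * ‖x‖⌉₊ + 1 : ℕ) ≤ k := le_max_right _ _
        calc 8 * ‖x‖ + 1 ≤ (⌈8 * ‖x‖⌉₊ : ℝ) + 1 := by
              linarith [Nat.le_ceil (8 * ‖x‖)]
          _ ≤ (k : ℝ) := by exact_mod_cast h1
      · have := hN k (le_max_left _ _)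
        simpa [dist_eq_norm, hq] using this
    have hPpos : 0 < ‖P‖ := by nlinarith [norm_nonneg x]
    -- z = x - P
    obtain ⟨z, hz⟩ : ∃ z : V, z = x - P := ⟨x - P, rfl⟩
    have hznorm_lb : ‖P‖ - ‖x‖ ≤ ‖z‖ := by
      calc ‖P‖ - ‖x‖ ≤ ‖P - x‖ := norm_sub_norm_le P x
        _ = ‖z‖ := by rw [hz, norm_sub_rev]
    have hzpos : 0 < ‖z‖ := by nlinarith [norm_nonneg x]
    have hzne : z ≠ 0 := by
      intro h; rw [h, norm_zero] at hzpos; exact lt_irrefl _ hzpos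
    -- the key estimate: ‖u + ‖z‖⁻¹ • z‖ < 1/2
    have hub2 : ‖u + ‖z‖⁻¹ • z‖ < 1/2 := by
      have hxzP : x = z + P := by rw [hz]; abel
      have key : ‖z‖⁻¹ • z + ‖P‖⁻¹ • P = (‖z‖⁻¹ - ‖P‖⁻¹) • z + ‖P‖⁻¹ • x := by
        rw [sub_smul, hxzP, smul_add]; abel
      have h2 : ‖‖z‖⁻¹ • z + ‖P‖⁻¹ • P‖ ≤ |‖z‖⁻¹ - ‖P‖⁻¹| * ‖z‖ + ‖P‖⁻¹ * ‖x‖ := by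
        rw [key]
        calc ‖(‖z‖⁻¹ - ‖P‖⁻¹) • z + ‖P‖⁻¹ • x‖
            ≤ ‖(‖z‖⁻¹ - ‖P‖⁻¹) • z‖ + ‖‖P‖⁻¹ • x‖ := norm_add_le _ _
          _ = |‖z‖⁻¹ - ‖P‖⁻¹| * ‖z‖ + ‖P‖⁻¹ * ‖x‖ := by
              rw [norm_smul, norm_smul, Real.norm_eq_abs, Real.norm_eq_abs,
                abs_of_pos (inv_pos.2 hPpos)]
      have hzub : ‖z‖ ≤ ‖P‖ + ‖x‖ := by
        calc ‖z‖ = ‖x - P‖ := by rw [hz]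
          _ ≤ ‖x‖ + ‖P‖ := norm_sub_le _ _
          _ = ‖P‖ + ‖x‖ := by ring
      have habs : |‖z‖⁻¹ - ‖P‖⁻¹| * ‖z‖ ≤ ‖x‖ / ‖P‖ := by
        rw [abs_sub_comm]
        have heq : |‖P‖⁻¹ - ‖z‖⁻¹| = |‖z‖ - ‖P‖| / (‖P‖ * ‖z‖) := by
          rw [inv_sub_inv hPpos.ne' hzpos.ne', abs_div,
            abs_of_pos (mul_pos hPpos hzpos)]
        have habs2 : |‖z‖ - ‖P‖| ≤ ‖x‖ := by
          rw [abs_sub_le_iff]; constructor <;> linarith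
        rw [heq, div_mul_eq_mul_div, div_le_div_iff₀ (mul_pos hPpos hzpos) hPpos]
        calc |‖z‖ - ‖P‖| * ‖z‖ * ‖P‖ ≤ ‖x‖ * ‖z‖ * ‖P‖ := by
              refine mul_le_mul_of_nonneg_right
                (mul_le_mul_of_nonneg_right habs2 (norm_nonneg z)) (norm_nonneg P)
          _ = ‖x‖ * (‖P‖ * ‖z‖) := by ring
      have h3 : ‖‖z‖⁻¹ • z + ‖P‖⁻¹ • P‖ ≤ 2 * ‖x‖ / ‖P‖ := by
        calc ‖‖z‖⁻¹ • z + ‖P‖⁻¹ • P‖ ≤ |‖z‖⁻¹ - ‖P‖⁻¹| * ‖z‖ + ‖P‖⁻¹ * ‖x‖ := h2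
          _ ≤ ‖x‖ / ‖P‖ + ‖x‖ / ‖P‖ := by
              refine add_le_add habs (le_of_eq ?_)
              rw [inv_mul_eq_div]
          _ = 2 * ‖x‖ / ‖P‖ := by ring
      have h4 : 2 * ‖x‖ / ‖P‖ ≤ 1/4 := by
        rw [div_le_iff₀ hPpos]
        nlinarith [norm_nonneg x]
      calc ‖u + ‖z‖⁻¹ • z‖
          ≤ ‖u - ‖P‖⁻¹ • P‖ + ‖‖P‖⁻¹ • P + ‖z‖⁻¹ • z‖ := by
            have heq2 : u + ‖z‖⁻¹ • z = (u - ‖P‖⁻¹ • P) + (‖P‖⁻¹ • P + ‖z‖⁻¹ • z) := by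
              abel
            rw [heq2]; exact norm_add_le _ _
        _ < 1/4 + 1/4 := by
            refine add_lt_add_of_lt_of_le ?_ ?_
            · rw [norm_sub_rev]; exact hqk
            · rw [add_comm]
              exact h3.trans h4
        _ = 1/2 := by norm_num
    -- norming functional
    obtain ⟨ψ, hψ1, hψz⟩ := exists_dual_vector ℝ z hzpos.ne'
    have hψu : ψ u ≤ -1/2 := by
      have h1 : ψ (u + ‖z‖⁻¹ • z) ≤ ‖u + ‖z‖⁻¹ • z‖ := by
        calc ψ (u + ‖z‖⁻¹ • z) ≤ |ψ (u + ‖z‖⁻¹ • z)| := le_abs_self _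
          _ = ‖ψ (u + ‖z‖⁻¹ • z)‖ := (Real.norm_eq_abs _).symm
          _ ≤ ‖ψ‖ * ‖u + ‖z‖⁻¹ • z‖ := ψ.le_opNorm _
          _ = ‖u + ‖z‖⁻¹ • z‖ := by rw [hψ1, one_mul]
      have h2 : ψ (u + ‖z‖⁻¹ • z) = ψ u + 1 := by
        rw [map_add, map_smul, smul_eq_mul, hψz]
        simp [inv_mul_cancel₀ hzpos.ne']
      linarith [h1.trans_lt hub2]
    -- the contradiction
    have hle : ‖z - δ • u‖ ≤ ‖z‖ := by
      have hxy := hf x P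
      rw [hfx, hPfix] at hxy
      calc ‖z - δ • u‖ = ‖x - δ • u - P‖ := by rw [hz]; congr 1; abel
        _ ≤ ‖x - P‖ := hxy
        _ = ‖z‖ := by rw [hz]
    have hge : ‖z‖ + δ/2 ≤ ‖z - δ • u‖ := by
      have h1 : ψ (z - δ • u) ≤ ‖z - δ • u‖ := by
        calc ψ (z - δ • u) ≤ |ψ (z - δ • u)| := le_abs_self _
          _ = ‖ψ (z - δ • u)‖ := (Real.norm_eq_abs _).symm
          _ ≤ ‖ψ‖ * ‖z - δ • u‖ := ψ.le_opNorm _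
          _ = ‖z - δ • u‖ := by rw [hψ1, one_mul]
      have h2 : ψ (z - δ • u) = ‖z‖ - δ * ψ u := by
        rw [map_sub, map_smul, smul_eq_mul, hψz]
        simp
      nlinarith
    linarith
  · intro x
    have h : f x - (f x + δ • u) = -(δ • u) := by abel
    rw [h, norm_neg, norm_smul, Real.norm_eq_abs, abs_of_pos hδ, hu1, mul_one]
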